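/- arXiv:2605.17592 — 9 statements merged into one kernel-verified Lean document; each statement's English description precedes it below -/
import Mathlib

section
/- If in the residual recursion R_n → 0 strongly, then the map V : H → ⊕_{n≥1} K_n, Vh = (B_1 h, B_2 h, ...), where B_n = A_n^{1/2} R_{n-1}^{1/2} and K_n is the closure of the range of B_n, is a well-defined isometry, and V* P_n V = T_n for every n, where P_n is the orthogonal projection onto the n-th summand. -/
set_option synthInstance.maxHeartbeats 1000000
set_option maxHeartbeats 1000000

open Filter Topology

/- Naimark dilation of the residual recursion (0-based indexing).  With
`B n = (A n)^{1/2} (R n)^{1/2}` and `K n` the closure of the range of `B n`,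
assuming `R n → 0` strongly, the map `V h = (B 0 h, B 1 h, …)` is a
well-defined isometry into `⊕ₙ K n = lp _ 2`, and `V* Pₙ V = T n`, i.e.
`⟪Pₙ V g, Pₙ V h⟫ = ⟪g, T n h⟫` for all `g h`. -/
theorem residual_naimark_isometry
    {H : Type*} [NormedAddCommGroup H] [InnerProductSpace ℂ H] [CompleteSpace H]
    (A T R : ℕ → H →L[ℂ] H)
    (hA : ∀ n, 0 ≤ A n ∧ A n ≤ 1)
    (hR0 : R 0 = 1)
    (hT : ∀ n, T n = CFC.sqrt (R n) * A n * CFC.sqrt (R n))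
    (hR : ∀ n, R (n + 1) = CFC.sqrt (R n) * (1 - A n) * CFC.sqrt (R n))
    (hRlim : ∀ h : H, Tendsto (fun n => R n h) atTop (nhds 0))
    (B : ℕ → H →L[ℂ] H)
    (hB : ∀ n, B n = CFC.sqrt (A n) * CFC.sqrt (R n)) :
    ∃ V : H →ₗᵢ[ℂ]
        (lp (fun n : ℕ => ((LinearMap.range (B n : H →ₗ[ℂ] H)).topologicalClosure : Submodule ℂ H)) 2),
      (∀ (h : H) (n : ℕ), ((V h : lp _ 2) n : H) = B n h) ∧
      (∀ (n : ℕ) (g h : H),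
        (inner ℂ ((V g : lp _ 2) n : H) ((V h : lp _ 2) n : H) : ℂ) = inner ℂ g (T n h)) := by
  -- positivity of the residuals
  have hRpos : ∀ n, (0 : H →L[ℂ] H) ≤ R n := by
    intro n
    induction n with
    | zero => rw [hR0]; exact zero_le_one
    | succ n ih =>
      rw [hR n]
      have h1 : (0 : H →L[ℂ] H) ≤ 1 - A n := sub_nonneg.mpr (hA n).2
      have := star_left_conjugate_nonneg h1 (CFC.sqrt (R n))
      rwa [(CFC.sqrt_nonneg (a := R n)).isSelfAdjoint.star_eq] at this
  -- key telescoping identity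
  have hkey : ∀ n, R (n + 1) = R n - T n := by
    intro n
    rw [hR n, hT n, mul_sub, mul_one, sub_mul, CFC.sqrt_mul_sqrt_self (R n) (hRpos n)]
  -- B n is a "square root" of T n
  have hBBT : ∀ n, star (B n) * B n = T n := by
    intro n
    rw [hB n, hT n, star_mul, (CFC.sqrt_nonneg (a := A n)).isSelfAdjoint.star_eq,
      (CFC.sqrt_nonneg (a := R n)).isSelfAdjoint.star_eq]
    calc CFC.sqrt (R n) * CFC.sqrt (A n) * (CFC.sqrt (A n) * CFC.sqrt (R n))
        = CFC.sqrt (R n) * (CFC.sqrt (A n) * CFC.sqrt (A n)) * CFC.sqrt (R n) := by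
          simp only [mul_assoc]
      _ = CFC.sqrt (R n) * A n * CFC.sqrt (R n) := by
          rw [CFC.sqrt_mul_sqrt_self (A n) (hA n).1]
  -- the key inner-product identity
  have hinner : ∀ n (g h : H), (inner ℂ (B n g) (B n h) : ℂ) = inner ℂ g (T n h) := by
    intro n g h
    rw [← hBBT n, ContinuousLinearMap.mul_apply, ContinuousLinearMap.star_eq_adjoint]
    exact (ContinuousLinearMap.adjoint_inner_right (B n) g (B n h)).symm
  -- the norm is preserved : HasSum of squared norms
  have hnormsq : ∀ n (h : H), ‖B n h‖ ^ 2 = RCLike.re (inner ℂ h (T n h) : ℂ) := by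
    intro n h
    rw [← hinner n h h, inner_self_eq_norm_sq]
  have hsum : ∀ h : H, HasSum (fun n => ‖B n h‖ ^ 2) (‖h‖ ^ 2) := by
    intro h
    rw [hasSum_iff_tendsto_nat_of_nonneg (fun n => by positivity)]
    have heq : ∀ N, ∑ n ∈ Finset.range N, ‖B n h‖ ^ 2
        = ‖h‖ ^ 2 - RCLike.re (inner ℂ h (R N h) : ℂ) := by
      intro N
      induction N with
      | zero =>
        simp only [Finset.range_zero, Finset.sum_empty, hR0,
          ContinuousLinearMap.one_apply, inner_self_eq_norm_sq]
        ring
      | succ N ih =>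
        rw [Finset.sum_range_succ, ih, hnormsq N h, hkey N,
          ContinuousLinearMap.sub_apply, inner_sub_right, map_sub]
        ring
    have hlim : Tendsto (fun N => ‖h‖ ^ 2 - RCLike.re (inner ℂ h (R N h) : ℂ)) atTop
        (nhds (‖h‖ ^ 2)) := by
      have h1 : Tendsto (fun N => (inner ℂ h (R N h) : ℂ)) atTop (nhds 0) := by
        simpa using (tendsto_const_nhds (x := h)).inner (hRlim h)
      have h2 : Tendsto (fun N => RCLike.re (inner ℂ h (R N h) : ℂ)) atTop (nhds 0) := by
        simpa [Function.comp_def] using (RCLike.continuous_re.tendsto 0).comp h1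
      simpa using tendsto_const_nhds.sub h2
    exact (funext heq : _) ▸ hlim
  -- coordinates lie in the prescribed subspaces
  have hmem : ∀ (h : H) (n : ℕ),
      B n h ∈ (LinearMap.range (B n : H →ₗ[ℂ] H)).topologicalClosure :=
    fun h n => Submodule.le_topologicalClosure _ (LinearMap.mem_range_self _ h)
  set K : ℕ → Submodule ℂ H := fun n => (LinearMap.range (B n : H →ₗ[ℂ] H)).topologicalClosure with hK
  let f : H → ∀ n, K n := fun h n => ⟨B n h, hmem h n⟩
  have hf2 : ∀ h : H, Memℓp (f h) 2 := by
    intro h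
    apply memℓp_gen
    have : Summable fun n => ‖B n h‖ ^ 2 := (hsum h).summable
    have h2 : ((2 : ENNReal).toReal) = (2 : ℝ) := by simp
    rw [h2]
    exact this.congr fun n => by rw [Real.rpow_two]; rfl
  let Vlin : H →ₗ[ℂ] lp (fun n => ↥(K n)) 2 :=
    { toFun := fun h => ⟨f h, hf2 h⟩
      map_add' := by
        intro x y
        apply Subtype.ext
        funext n
        apply Subtype.ext
        simp only [lp.coeFn_add, Pi.add_apply, Submodule.coe_add]
        exact map_add (B n) x y
      map_smul' := by
        intro c x
        apply Subtype.ext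
        funext n
        apply Subtype.ext
        simp only [lp.coeFn_smul, Pi.smul_apply, Submodule.coe_smul, RingHom.id_apply]
        exact map_smul (B n) c x }
  have hnorm : ∀ h : H, ‖Vlin h‖ = ‖h‖ := by
    intro h
    have hp : (0 : ℝ) < (2 : ENNReal).toReal := by simp
    have := lp.norm_rpow_eq_tsum hp (Vlin h)
    have h2 : ((2 : ENNReal).toReal) = (2 : ℝ) := by simp
    rw [h2] at this
    have hcoord : ∀ n, ‖(Vlin h : ∀ n, K n) n‖ = ‖B n h‖ := fun n => rfl
    have hVsq : ‖Vlin h‖ ^ (2 : ℕ) = ‖h‖ ^ (2 : ℕ) := by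
      have := this
      rw [show ((2 : ℝ)) = ((2 : ℕ) : ℝ) by norm_num] at this
      simp only [Real.rpow_natCast] at this
      rw [this]
      simp only [hcoord]
      exact (hsum h).tsum_eq
    exact (sq_eq_sq₀ (norm_nonneg _) (norm_nonneg _)).mp hVsq
  refine ⟨{ toLinearMap := Vlin, norm_map' := hnorm }, fun h n => rfl, fun n g h => hinner n g h⟩
end

section
/- Let M be a finite-dimensional subspace of a Hilbert space K, P an orthogonal projection on K with complement Q = I - P, and C the compression of P to M. Then dim(QM / (M ∩ QK)) = rank(C - C^2), where QM is the image of M under Q. -/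
open scoped InnerProductSpace

/-- For a selfadjoint idempotent `R`, if the orthogonal projection onto `M` of `R m`
vanishes for `m ∈ M`, then `R m = 0`. -/
lemma aux_proj_zero {K : Type*} [NormedAddCommGroup K] [InnerProductSpace ℂ K]
    [CompleteSpace K] (M : Submodule ℂ K) [FiniteDimensional ℂ M]
    (R : K →L[ℂ] K) (hR : IsIdempotentElem R) (hRsa : IsSelfAdjoint R)
    (m : M) (h : M.orthogonalProjectionOnto (R m) = 0) : R (m : K) = 0 := by
  have h1 : ⟪R (m : K), (m : K)⟫_ℂ = 0 := by
    have := M.starProjection_inner_eq_zero (R (m : K)) (m : K) m.2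
    rwa [Submodule.starProjection_apply, h, Submodule.coe_zero, sub_zero] at this
  have h2 : ⟪R (m : K), R (m : K)⟫_ℂ = 0 := by
    have hsym := hRsa.isSymmetric
    have : ⟪R (m : K), R (m : K)⟫_ℂ = ⟪(m : K), R (R (m : K))⟫_ℂ := (hsym _ _)
    rw [this]
    have hRR : R (R (m : K)) = R (m : K) := by
      have := congrArg (fun T : K →L[ℂ] K => T (m : K)) hR
      simpa [ContinuousLinearMap.mul_apply] using this
    rw [hRR, ← inner_conj_symm, h1, map_zero]
  exact inner_self_eq_zero.mp h2

theorem compression_rank_formula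
    {K : Type*} [NormedAddCommGroup K] [InnerProductSpace ℂ K] [CompleteSpace K]
    (M : Submodule ℂ K) [FiniteDimensional ℂ M]
    (P : K →L[ℂ] K) (hP : IsIdempotentElem P) (hPsa : IsSelfAdjoint P)
    (Q : K →L[ℂ] K) (hQ : Q = 1 - P)
    (C : M →L[ℂ] M) (hC : C = M.orthogonalProjectionOnto ∘L P ∘L M.subtypeL) :
    Module.finrank ℂ ↥(M.map (Q : K →ₗ[ℂ] K)) - Module.finrank ℂ ↥(M ⊓ LinearMap.range (Q : K →ₗ[ℂ] K)) =
      Module.finrank ℂ (LinearMap.range ((C - C * C : M →L[ℂ] M) : M →ₗ[ℂ] M)) := by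
  classical
  have hQidem : IsIdempotentElem Q := hQ ▸ hP.one_sub
  have hQsa : IsSelfAdjoint Q := hQ ▸ ((IsSelfAdjoint.one (K →L[ℂ] K)).sub hPsa)
  have hPapp : ∀ x : K, P (P x) = P x := by
    intro x
    have := congrArg (fun T : K →L[ℂ] K => T x) hP
    simpa [ContinuousLinearMap.mul_apply] using this
  -- C m = proj (P m), and m - C m = proj (Q m)
  have hCm : ∀ m : M, C m = M.orthogonalProjectionOnto (P m) := by
    intro m; rw [hC]; rfl
  have hDm : ∀ m : M, m - C m = M.orthogonalProjectionOnto (Q m) := by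
    intro m
    have : Q (m : K) = (m : K) - P m := by rw [hQ]; simp
    rw [this, map_sub, hCm m, Submodule.orthogonalProjectionOnto_mem_subspace_eq_self]
  -- range Q = ker P
  have hrange : LinearMap.range (Q : K →ₗ[ℂ] K) = LinearMap.ker (P : K →ₗ[ℂ] K) := by
    ext x
    simp only [LinearMap.mem_range, LinearMap.mem_ker]
    constructor
    · rintro ⟨y, rfl⟩
      rw [hQ]; simp [hPapp y]
    · intro hx
      exact ⟨x, by rw [hQ]; simp [hx]⟩
  set A : Submodule ℂ M := (LinearMap.ker (P : K →ₗ[ℂ] K)).comap M.subtype with hA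
  set B : Submodule ℂ M := (LinearMap.ker (Q : K →ₗ[ℂ] K)).comap M.subtype with hB
  have hmemA : ∀ m : M, m ∈ A ↔ P (m : K) = 0 := fun m => Iff.rfl
  have hmemB : ∀ m : M, m ∈ B ↔ Q (m : K) = 0 := fun m => Iff.rfl
  -- members of A/B are killed by C resp. 1 - C
  have hAzero : ∀ m : M, P (m : K) = 0 → C m = 0 := by
    intro m hm
    rw [hCm m, hm, map_zero]
  have hBzero : ∀ m : M, Q (m : K) = 0 → m - C m = 0 := by
    intro m hm
    rw [hDm m, hm, map_zero]
  -- kernel of C - C² is A ⊔ B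
  have hker : LinearMap.ker ((C - C * C : M →L[ℂ] M) : M →ₗ[ℂ] M) = A ⊔ B := by
    ext m
    simp only [LinearMap.mem_ker, ContinuousLinearMap.coe_sub', Pi.sub_apply,
      ContinuousLinearMap.mul_apply]
    constructor
    · intro hm
      have hm' : C m - C (C m) = 0 := hm
      -- b := m - C m ∈ A
      have hb : (m - C m) ∈ A := by
        rw [hmemA]
        apply aux_proj_zero M P hP hPsa
        rw [← hCm (m - C m)]
        rw [map_sub, hm']
      -- a := C m ∈ B
      have ha : (C m) ∈ B := by
        rw [hmemB]
        apply aux_proj_zero M Q hQidem hQsa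
        rw [← hDm (C m), hm']
      exact Submodule.mem_sup.mpr ⟨m - C m, hb, C m, ha, by abel⟩
    · intro hm
      rcases Submodule.mem_sup.mp hm with ⟨a, ha, b, hb, rfl⟩
      have h1 : C a = 0 := hAzero a ((hmemA a).mp ha)
      have h2 : b - C b = 0 := hBzero b ((hmemB b).mp hb)
      have h2' : C b = b := by rwa [sub_eq_zero, eq_comm] at h2
      show C (a + b) - C (C (a + b)) = 0
      rw [map_add, h1, zero_add, h2']
      exact h2
  -- A ⊓ B = ⊥
  have hAB : A ⊓ B = ⊥ := by
    rw [Submodule.eq_bot_iff]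
    rintro m ⟨ha, hb⟩
    have h1 : P (m : K) = 0 := (hmemA m).mp ha
    have h2 : Q (m : K) = 0 := (hmemB m).mp hb
    have : (m : K) = 0 := by
      have : P (m : K) + Q (m : K) = (m : K) := by rw [hQ]; simp
      rw [h1, h2, add_zero] at this
      exact this.symm
    exact Subtype.ext this
  -- rank–nullity for Q ∘ subtype
  set f : M →ₗ[ℂ] K := (Q : K →ₗ[ℂ] K) ∘ₗ M.subtype with hf
  have hrangef : LinearMap.range f = M.map (Q : K →ₗ[ℂ] K) := by
    rw [hf, LinearMap.range_comp, Submodule.range_subtype]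
  have hkerf : LinearMap.ker f = B := by
    rw [hf, LinearMap.ker_comp]
  have rn1 : Module.finrank ℂ ↥(M.map (Q : K →ₗ[ℂ] K)) + Module.finrank ℂ B = Module.finrank ℂ M := by
    have := LinearMap.finrank_range_add_finrank_ker f
    rwa [hrangef, hkerf] at this
  -- finrank (M ⊓ range Q) = finrank A
  have hinf : Module.finrank ℂ ↥(M ⊓ LinearMap.range (Q : K →ₗ[ℂ] K)) = Module.finrank ℂ A := by
    rw [hrange]
    have hle : M ⊓ LinearMap.ker (P : K →ₗ[ℂ] K) ≤ M := inf_le_left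
    have e := (Submodule.comapSubtypeEquivOfLe hle).finrank_eq
    have hcomap : (M ⊓ LinearMap.ker (P : K →ₗ[ℂ] K)).comap M.subtype = A := by
      rw [Submodule.comap_inf, Submodule.comap_subtype_self, top_inf_eq, hA]
    rw [← e, hcomap]
  -- rank–nullity for C - C²
  have rn2 : Module.finrank ℂ (LinearMap.range ((C - C * C : M →L[ℂ] M) : M →ₗ[ℂ] M)) +
      (Module.finrank ℂ A + Module.finrank ℂ B) = Module.finrank ℂ M := by
    have := LinearMap.finrank_range_add_finrank_ker ((C - C * C : M →L[ℂ] M) : M →ₗ[ℂ] M)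
    have hrg : LinearMap.range ((C - C * C : M →L[ℂ] M) : M →ₗ[ℂ] M) =
        LinearMap.range ((C - C * C : M →L[ℂ] M) : M →ₗ[ℂ] M) := rfl
    have hkr : LinearMap.ker ((C - C * C : M →L[ℂ] M) : M →ₗ[ℂ] M) =
        LinearMap.ker ((C - C * C : M →L[ℂ] M) : M →ₗ[ℂ] M) := rfl
    rw [hrg, hkr, hker] at this
    have hsum := Submodule.finrank_sup_add_finrank_inf_eq A B
    rw [hAB, finrank_bot, add_zero] at hsum
    omega
  omega
end

section
/- For an ordered POVM (A_1, A_2, ...), the m-th iterate of the residual transform satisfies A_2^{(m)} = (I - A_1)^{m/2} A_2 (I - A_1)^{m/2}, and consequently A_2^{(m)} converges strongly to P A_2 P where P is the orthogonal projection onto ker A_1. -/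
set_option synthInstance.maxHeartbeats 1000000
set_option maxHeartbeats 1000000

open Filter Topology

private lemma aux_real_bound (t : ℝ) (ht : 0 ≤ t) (ht1 : t ≤ 1) (m : ℕ) :
    t ^ m * (1 - t ^ 2) ≤ 2 / (m + 1) := by
  have hm : (0:ℝ) < m + 1 := by positivity
  rw [le_div_iff₀ hm]
  have h2 : (m + 1 : ℝ) * t ^ m ≤ ∑ i ∈ Finset.range (m+1), t ^ i := by
    calc (m + 1 : ℝ) * t ^ m = ∑ _i ∈ Finset.range (m+1), t ^ m := by
          simp [Finset.sum_const, mul_comm]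
      _ ≤ ∑ i ∈ Finset.range (m+1), t ^ i :=
          Finset.sum_le_sum fun i hi =>
            pow_le_pow_of_le_one ht ht1 (by simp at hi; omega)
  have h3 : (∑ i ∈ Finset.range (m+1), t ^ i) * (1 - t) = 1 - t ^ (m+1) := by
    have := geom_sum_mul t (m+1)
    nlinarith [this]
  have h4 : (m+1:ℝ) * t ^ m * (1 - t) ≤ 1 := by
    have htt : 0 ≤ 1 - t := by linarith
    nlinarith [pow_nonneg ht (m+1)]
  nlinarith [pow_nonneg ht m, mul_nonneg (pow_nonneg ht m) (sub_nonneg.2 ht1)]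

/- Second coordinate under iteration of the residual transform (0-based: `A 0`,
`A 1` are the paper's `A₁`, `A₂`).  Since the first coordinate is fixed, the
residual before the second coordinate is always `I - A 0`, so the iterates
`X m = A₂^{(m)}` satisfy `X (m+1) = (I - A 0)^{1/2} X m (I - A 0)^{1/2}`.
Then `X m = (I - A 0)^{m/2} A 1 (I - A 0)^{m/2}` and `X m → P A 1 P` strongly,
`P` the orthogonal projection onto `ker (A 0)`. -/
theorem second_coordinate_iteration
    {H : Type*} [NormedAddCommGroup H] [InnerProductSpace ℂ H] [CompleteSpace H]
    (A : ℕ → H →L[ℂ] H)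
    (hApos : ∀ n, 0 ≤ A n)
    (hAsum : ∀ h : H, HasSum (fun n => A n h) h)
    (X : ℕ → H →L[ℂ] H)
    (hX0 : X 0 = A 1)
    (hXrec : ∀ m, X (m + 1) = CFC.sqrt (1 - A 0) * X m * CFC.sqrt (1 - A 0))
    (P : H →L[ℂ] H) (hPidem : IsIdempotentElem P) (hPsa : IsSelfAdjoint P)
    (hPrange : LinearMap.range (P : H →ₗ[ℂ] H) = LinearMap.ker (A 0 : H →ₗ[ℂ] H)) :
    (∀ m, X m = (CFC.sqrt (1 - A 0)) ^ m * A 1 * (CFC.sqrt (1 - A 0)) ^ m) ∧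
    (∀ h : H, Tendsto (fun m => X m h) atTop (nhds (P (A 1 (P h))))) := by
  obtain hH | hH := subsingleton_or_nontrivial H
  · have hsub : Subsingleton (H →L[ℂ] H) :=
      ⟨fun f g => ContinuousLinearMap.ext fun x => Subsingleton.elim _ _⟩
    refine ⟨fun m => Subsingleton.elim _ _, fun h => ?_⟩
    have hXh : ∀ m, X m h = P (A 1 (P h)) := fun m => Subsingleton.elim _ _
    exact tendsto_const_nhds.congr fun m => (hXh m).symm
  -- Notation and basic positivity facts
  set S := CFC.sqrt (1 - A 0) with hSdef
  -- Part 1 : the explicit formula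
  have part1 : ∀ m, X m = S ^ m * A 1 * S ^ m := by
    intro m
    induction m with
    | zero => simpa using hX0
    | succ k ih =>
      rw [hXrec k, ih]
      conv_rhs => rw [pow_succ']
      simp only [mul_assoc]
      rw [pow_mul_comm']
  refine ⟨part1, ?_⟩
  -- positivity of each A n
  have hApos' : ∀ n, (A n).IsPositive := fun n =>
    (ContinuousLinearMap.nonneg_iff_isPositive _).1 (hApos n)
  have hA0sa : IsSelfAdjoint (A 0) := (hApos' 0).isSelfAdjoint
  -- A 0 ≤ 1
  have hA0le1 : A 0 ≤ 1 := by
    rw [ContinuousLinearMap.le_def]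
    refine ⟨ContinuousLinearMap.isSelfAdjoint_iff_isSymmetric.mp ((IsSelfAdjoint.one (H →L[ℂ] H)).sub hA0sa), ?_⟩
    intro x
    have hsum : HasSum (fun n => RCLike.re (inner ℂ x (A n x) : ℂ))
        (RCLike.re (inner ℂ x x : ℂ)) :=
      ((hAsum x).mapL (innerSL ℂ x)).mapL (RCLike.reCLM)
    have hle : RCLike.re (inner ℂ x (A 0 x) : ℂ) ≤ RCLike.re (inner ℂ x x : ℂ) :=
      le_hasSum hsum 0 fun j _ => (hApos' j).re_inner_nonneg_right x
    have hsymm : RCLike.re (inner ℂ (A 0 x) x : ℂ) = RCLike.re (inner ℂ x (A 0 x) : ℂ) :=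
      inner_re_symm _ _
    simp only [ContinuousLinearMap.reApplyInnerSelf, ContinuousLinearMap.sub_apply,
      ContinuousLinearMap.one_apply, inner_sub_left, map_sub]
    linarith
  have hT : (0 : H →L[ℂ] H) ≤ 1 - A 0 :=
    (ContinuousLinearMap.nonneg_iff_isPositive _).2 ((ContinuousLinearMap.le_def _ _).1 hA0le1)
  have hT1 : (1 - A 0 : H →L[ℂ] H) ≤ 1 := by
    rw [ContinuousLinearMap.le_def]
    have : (1 : H →L[ℂ] H) - (1 - A 0) = A 0 := sub_sub_cancel 1 (A 0)
    rw [this]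
    exact hApos' 0
  have hSnn : (0 : H →L[ℂ] H) ≤ S := CFC.sqrt_nonneg _
  have hSpos : S.IsPositive := (ContinuousLinearMap.nonneg_iff_isPositive _).1 hSnn
  have hSsa : IsSelfAdjoint S := IsSelfAdjoint.of_nonneg hSnn
  have hSS : S * S = 1 - A 0 := CFC.sqrt_mul_sqrt_self _ hT
  -- norm bounds
  have hnormT : ‖(1 - A 0 : H →L[ℂ] H)‖ ≤ 1 := by
    calc ‖(1 - A 0 : H →L[ℂ] H)‖ ≤ ‖(1 : H →L[ℂ] H)‖ :=
          CStarAlgebra.norm_le_norm_of_nonneg_of_le hT hT1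
      _ = 1 := norm_one
  have hnormS : ‖S‖ ≤ 1 := by
    have h1 : ‖S‖ * ‖S‖ = ‖(1 - A 0 : H →L[ℂ] H)‖ := by
      rw [← CStarRing.norm_star_mul_self (x := S), hSsa.star_eq, hSS]
    nlinarith [norm_nonneg S]
  have hSm : ∀ n, ‖S ^ n‖ ≤ 1 := by
    intro n
    induction n with
    | zero => simp
    | succ k ih =>
      rw [pow_succ]
      exact le_trans (norm_mul_le _ _) (by nlinarith [norm_nonneg (S ^ k)])
  -- spectrum of S lies in [0, 1]
  have hspec : ∀ t ∈ spectrum ℝ S, 0 ≤ t ∧ t ≤ 1 := by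
    intro t ht
    refine ⟨spectrum_nonneg_of_nonneg hSnn ht, ?_⟩
    calc t ≤ ‖t‖ := le_abs_self t
      _ ≤ ‖S‖ := spectrum.norm_le_norm_of_mem ht
      _ ≤ 1 := hnormS
  -- the crucial operator-norm estimate
  have hSA : ∀ m : ℕ, ‖S ^ m * A 0‖ ≤ 2 / (m + 1) := by
    intro m
    have hA0eq : (A 0 : H →L[ℂ] H) = 1 - S * S := by rw [hSS]; abel
    have hcfc : S ^ m * A 0 = cfc (fun t : ℝ => t ^ m * (1 - t ^ 2)) S := by
      rw [cfc_mul (fun t : ℝ => t ^ m) (fun t : ℝ => 1 - t ^ 2) S, cfc_pow_id (R := ℝ) S m,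
        cfc_sub (fun _ : ℝ => (1:ℝ)) (fun t : ℝ => t ^ 2) S, cfc_const_one ℝ S,
        cfc_pow_id (R := ℝ) S 2, sq, hA0eq]
    rw [hcfc]
    refine norm_cfc_le (by positivity) fun t ht => ?_
    obtain ⟨h0, h1⟩ := hspec t ht
    have hnn : 0 ≤ 1 - t ^ 2 := by nlinarith
    rw [Real.norm_eq_abs, abs_of_nonneg (mul_nonneg (pow_nonneg h0 m) hnn)]
    exact aux_real_bound t h0 h1 m
  -- fixed points of S
  have hfix : ∀ x : H, A 0 x = 0 → S x = x := by
    intro x hx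
    have h2 : S (S x) = x := by
      have h2' : (S * S) x = x := by
        rw [hSS]
        simp [ContinuousLinearMap.sub_apply, hx]
      simpa [ContinuousLinearMap.mul_apply] using h2'
    set y := S x - x with hy0
    have hy : S y = -y := by
      calc S y = S (S x) - S x := by simp [hy0, map_sub]
        _ = x - S x := by rw [h2]
        _ = -y := by simp [hy0]
    have h3 : 0 ≤ RCLike.re (inner ℂ (S y) y : ℂ) := hSpos.re_inner_nonneg_left y
    have h4 : RCLike.re (inner ℂ (S y) y : ℂ) = -(‖y‖ ^ 2) := by
      rw [hy, inner_neg_left, map_neg]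
      simp [inner_self_eq_norm_sq]
      rw [← Complex.ofReal_pow, Complex.ofReal_re]
    have h5 : ‖y‖ = 0 := by nlinarith [norm_nonneg y]
    have h6 : y = 0 := norm_eq_zero.mp h5
    have := sub_eq_zero.mp (hy0 ▸ h6)
    exact this
  -- adjoint inner ℂ manipulations
  have hA0adj : ContinuousLinearMap.adjoint (A 0) = A 0 :=
    ContinuousLinearMap.isSelfAdjoint_iff'.mp hA0sa
  have hPadj : ContinuousLinearMap.adjoint P = P :=
    ContinuousLinearMap.isSelfAdjoint_iff'.mp hPsa
  have hAinner : ∀ y z : H, (inner ℂ (A 0 y) z : ℂ) = inner ℂ y (A 0 z) := by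
    intro y z
    conv_lhs => rw [← hA0adj]
    exact ContinuousLinearMap.adjoint_inner_left _ _ _
  have hPinner : ∀ y z : H, (inner ℂ (P y) z : ℂ) = inner ℂ y (P z) := by
    intro y z
    conv_lhs => rw [← hPadj]
    exact ContinuousLinearMap.adjoint_inner_left _ _ _
  -- kernel of A 0 equals orthogonal of range
  have hker_eq : (LinearMap.ker (A 0 : H →ₗ[ℂ] H) : Submodule ℂ H) = (LinearMap.range (A 0 : H →ₗ[ℂ] H))ᗮ := by
    ext z
    rw [Submodule.mem_orthogonal, LinearMap.mem_ker]
    constructor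
    · intro hz u hu
      obtain ⟨w, rfl⟩ := hu
      simp only [ContinuousLinearMap.coe_coe] at hz ⊢
      rw [hAinner, hz, inner_zero_right]
    · intro hz
      have h7 : (inner ℂ (A 0 z) (A 0 z) : ℂ) = 0 := by
        rw [← hAinner]
        exact hz _ ⟨A 0 z, rfl⟩
      exact inner_self_eq_zero.mp h7
  -- elements of ker P lie in the closure of range (A 0)
  have hkerorth : ∀ x : H, P x = 0 →
      x ∈ (LinearMap.range (A 0 : H →ₗ[ℂ] H)).topologicalClosure := by
    intro x hx
    have hxo : x ∈ (LinearMap.ker (A 0 : H →ₗ[ℂ] H) : Submodule ℂ H)ᗮ := by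
      rw [Submodule.mem_orthogonal]
      intro u hu
      rw [← hPrange] at hu
      obtain ⟨w, rfl⟩ := hu
      rw [ContinuousLinearMap.coe_coe, hPinner, hx, inner_zero_right]
    rwa [hker_eq, Submodule.orthogonal_orthogonal_eq_closure] at hxo
  -- convergence to zero on the closure of the range
  have tendsto0 : ∀ x : H, x ∈ (LinearMap.range (A 0 : H →ₗ[ℂ] H)).topologicalClosure →
      Tendsto (fun m => (S ^ m) x) atTop (𝓝 0) := by
    intro x hx
    rw [NormedAddCommGroup.tendsto_nhds_zero]
    intro ε hε
    have hx' : x ∈ closure ((LinearMap.range (A 0 : H →ₗ[ℂ] H) : Submodule ℂ H) : Set H) := hx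
    rw [Metric.mem_closure_iff] at hx'
    obtain ⟨b, hb, hdist⟩ := hx' (ε/2) (by linarith)
    obtain ⟨y, rfl⟩ := hb
    rw [dist_eq_norm, ContinuousLinearMap.coe_coe] at hdist
    have h1 : Tendsto (fun m : ℕ => 1 / ((m:ℝ) + 1)) atTop (𝓝 0) :=
      tendsto_one_div_add_atTop_nhds_zero_nat
    have htail : Tendsto (fun m : ℕ => 2 / ((m:ℝ) + 1) * ‖y‖) atTop (𝓝 0) := by
      have heq : (fun m : ℕ => 2 / ((m:ℝ)+1) * ‖y‖)
          = fun m : ℕ => (2 * ‖y‖) * (1/((m:ℝ)+1)) := by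
        funext m; ring
      rw [heq]
      simpa using h1.const_mul (2 * ‖y‖)
    filter_upwards [htail.eventually (gt_mem_nhds (by linarith : (0:ℝ) < ε/2))] with n hn
    have heq2 : (S ^ n) x = (S ^ n) (x - A 0 y) + (S ^ n * A 0) y := by
      simp [map_sub, ContinuousLinearMap.mul_apply]
    rw [heq2]
    have e1 : ‖(S ^ n) (x - A 0 y)‖ ≤ ‖S ^ n‖ * ‖x - A 0 y‖ :=
      ContinuousLinearMap.le_opNorm _ _
    have e2 : ‖(S ^ n * A 0) y‖ ≤ ‖S ^ n * A 0‖ * ‖y‖ :=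
      ContinuousLinearMap.le_opNorm _ _
    have e3 := hSm n
    have e4 := hSA n
    have e5 := norm_add_le ((S ^ n) (x - A 0 y)) ((S ^ n * A 0) y)
    have hyn : (0:ℝ) ≤ ‖y‖ := norm_nonneg _
    have hxn : (0:ℝ) ≤ ‖x - A 0 y‖ := norm_nonneg _
    have hopn : (0:ℝ) ≤ ‖S ^ n‖ := norm_nonneg _
    nlinarith [mul_le_mul_of_nonneg_right e4 hyn]
  -- the strong limit of S ^ m is P
  have hconv : ∀ h : H, Tendsto (fun m => (S ^ m) h) atTop (𝓝 (P h)) := by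
    intro h
    have hPh : A 0 (P h) = 0 := by
      have hmem : P h ∈ LinearMap.range (P : H →ₗ[ℂ] H) := LinearMap.mem_range_self _ h
      rw [hPrange] at hmem
      exact hmem
    have hfixn : ∀ m, (S ^ m) (P h) = P h := by
      intro m
      induction m with
      | zero => simp
      | succ k ih => rw [pow_succ', ContinuousLinearMap.mul_apply, ih, hfix _ hPh]
    have hx0 : P (h - P h) = 0 := by
      have hPP : P (P h) = P h := congrArg (fun T => T h) hPidem
      simp [map_sub, hPP]
    have h0 := tendsto0 _ (hkerorth _ hx0)
    have heq : (fun m => (S ^ m) h) = fun m => P h + (S ^ m) (h - P h) := by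
      funext m
      simp [map_sub, hfixn m]
    rw [heq]
    simpa using tendsto_const_nhds.add h0
  -- assemble the second part
  intro h
  have t1 : Tendsto (fun m => (S ^ m) (A 1 (P h))) atTop (𝓝 (P (A 1 (P h)))) := hconv _
  have hnorm0 : Tendsto (fun m => ‖(S ^ m) h - P h‖) atTop (𝓝 0) := by
    have := hconv h
    rwa [tendsto_iff_norm_sub_tendsto_zero] at this
  have t2 : Tendsto (fun m => (S ^ m) (A 1 ((S ^ m) h)) - (S ^ m) (A 1 (P h)))
      atTop (𝓝 0) := by
    apply squeeze_zero_norm (a := fun m => ‖A 1‖ * ‖(S ^ m) h - P h‖)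
    · intro m
      have heq : (S ^ m) (A 1 ((S ^ m) h)) - (S ^ m) (A 1 (P h))
          = (S ^ m) (A 1 ((S ^ m) h - P h)) := by simp [map_sub]
      rw [heq]
      have e1 : ‖(S ^ m) (A 1 ((S ^ m) h - P h))‖ ≤ ‖S ^ m‖ * ‖A 1 ((S ^ m) h - P h)‖ :=
        ContinuousLinearMap.le_opNorm _ _
      have e2 : ‖A 1 ((S ^ m) h - P h)‖ ≤ ‖A 1‖ * ‖(S ^ m) h - P h‖ :=
        ContinuousLinearMap.le_opNorm _ _
      have e3 := hSm m
      nlinarith [norm_nonneg (A 1 ((S ^ m) h - P h)), norm_nonneg (S ^ m),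
        norm_nonneg ((S ^ m) h - P h), norm_nonneg (A 1)]
    · simpa using hnorm0.const_mul ‖A 1‖
  have t3 := t2.add t1
  have key : (fun m => X m h)
      = fun m => ((S ^ m) (A 1 ((S ^ m) h)) - (S ^ m) (A 1 (P h))) + (S ^ m) (A 1 (P h)) := by
    funext m
    rw [part1 m]
    simp [ContinuousLinearMap.mul_apply]
  rw [key]
  simpa using t3
end

section
/- Let (A_n) be an ordered POVM and set B_k = P_{k-1} A_k P_{k-1} where P_{k-1} is the orthogonal projection onto ∩_{j<k} ker A_j. Then the operators B_k are pairwise orthogonal: B_i B_j = 0 for i ≠ j. -/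
/- Collapse coordinates of an ordered POVM are pairwise orthogonal:
with `P k` the orthogonal projection onto `⋂_{j<k} ker (A j)` and
`B k = P k ∘ A k ∘ P k`, one has `B i * B j = 0` for `i ≠ j`. -/
theorem collapse_coordinates_pairwise_orthogonal
    {H : Type*} [NormedAddCommGroup H] [InnerProductSpace ℂ H] [CompleteSpace H]
    (A : ℕ → H →L[ℂ] H)
    (hApos : ∀ n, 0 ≤ A n)
    (hAsum : ∀ h : H, HasSum (fun n => A n h) h)
    (P : ℕ → H →L[ℂ] H)
    (hPidem : ∀ k, IsIdempotentElem (P k))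
    (hPsa : ∀ k, IsSelfAdjoint (P k))
    (hPrange : ∀ k, LinearMap.range (P k : H →ₗ[ℂ] H) = ⨅ j ∈ Finset.range k, LinearMap.ker (A j : H →ₗ[ℂ] H))
    (B : ℕ → H →L[ℂ] H)
    (hB : ∀ k, B k = P k * A k * P k) :
    ∀ i j, i ≠ j → B i * B j = 0 := by
  have hAsa : ∀ n, IsSelfAdjoint (A n) := fun n => IsSelfAdjoint.of_nonneg (hApos n)
  have hBsa : ∀ k, IsSelfAdjoint (B k) := by
    intro k
    rw [hB k]
    simp only [IsSelfAdjoint, star_mul]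
    rw [(hPsa k).star_eq, (hAsa k).star_eq, mul_assoc]
  have key : ∀ i j, i < j → B i * B j = 0 := by
    intro i j hij
    ext x
    have hy : B j x ∈ LinearMap.range (P j : H →ₗ[ℂ] H) := by
      rw [hB j]; exact ⟨(A j) (P j x), rfl⟩
    have hmem : B j x ∈ ⨅ m ∈ Finset.range j, LinearMap.ker (A m : H →ₗ[ℂ] H) := by
      rwa [hPrange j] at hy
    have hker : A i (B j x) = 0 := by
      simp only [Submodule.mem_iInf] at hmem
      exact hmem i (Finset.mem_range.mpr hij)
    have hPy : P i (B j x) = B j x := by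
      have hle : LinearMap.range (P j : H →ₗ[ℂ] H) ≤ LinearMap.range (P i : H →ₗ[ℂ] H) := by
        rw [hPrange i, hPrange j]
        exact le_iInf₂ fun m hm => iInf₂_le m
          (Finset.mem_range.mpr (lt_of_lt_of_le (Finset.mem_range.mp hm) hij.le))
      obtain ⟨z, hz⟩ := hle hy
      change P i z = B j x at hz
      rw [← hz, ← ContinuousLinearMap.comp_apply, ← ContinuousLinearMap.mul_def,
        hPidem i]
    simp only [ContinuousLinearMap.mul_apply, ContinuousLinearMap.zero_apply, hB i,
      hPy, hker, map_zero]
  intro i j hij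
  rcases lt_or_gt_of_ne hij with h | h
  · exact key i j h
  · calc B i * B j = star (B j * B i) := by
          rw [star_mul, (hBsa i).star_eq, (hBsa j).star_eq]
        _ = 0 := by rw [key j i h, star_zero]
end

section
/- With B_k = P_{k-1} A_k P_{k-1} as in the collapse of an ordered POVM and B_esc = I - Σ_{k≥1} B_k (strong sum), each B_i commutes with B_esc and B_i B_esc = B_esc B_i = B_i - B_i^2. In particular the collapsed family (B_1, B_2, ..., B_esc) is commutative. -/
/- With `B k = P k A k P k` the collapse coordinates of an ordered POVM and
`B_esc = I - Σ_k B k` (strong sum `S`), each `B i` commutes with `B_esc` and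
`B i * B_esc = B_esc * B i = B i - B i²`; in particular the collapsed family
`(B 0, B 1, …, B_esc)` is commutative. -/
theorem collapse_escape_commutation
    {H : Type*} [NormedAddCommGroup H] [InnerProductSpace ℂ H] [CompleteSpace H]
    (A : ℕ → H →L[ℂ] H)
    (hApos : ∀ n, 0 ≤ A n)
    (hAsum : ∀ h : H, HasSum (fun n => A n h) h)
    (P : ℕ → H →L[ℂ] H)
    (hPidem : ∀ k, IsIdempotentElem (P k))
    (hPsa : ∀ k, IsSelfAdjoint (P k))
    (hPrange : ∀ k, LinearMap.range (P k : H →ₗ[ℂ] H) = ⨅ j ∈ Finset.range k, LinearMap.ker (A j : H →ₗ[ℂ] H))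
    (B : ℕ → H →L[ℂ] H)
    (hB : ∀ k, B k = P k * A k * P k)
    (S Besc : H →L[ℂ] H)
    (hS : ∀ h : H, HasSum (fun k => B k h) (S h))
    (hBesc : Besc = 1 - S) :
    (∀ i, B i * Besc = Besc * B i ∧ B i * Besc = B i - B i * B i) ∧
    (∀ i j, B i * B j = B j * B i) := by
  -- each B k is self-adjoint
  have hAsa : ∀ n, IsSelfAdjoint (A n) := fun n => (hApos n).isSelfAdjoint
  have hBsa : ∀ k, IsSelfAdjoint (B k) := by
    intro k
    rw [hB k]
    simp only [IsSelfAdjoint, star_mul, (hPsa k).star_eq, (hAsa k).star_eq, mul_assoc]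
  -- B j x lies in range (P j)
  have hmemrange : ∀ j (x : H), B j x ∈ LinearMap.range (P j : H →ₗ[ℂ] H) := by
    intro j x
    rw [hB j]
    exact ⟨A j (P j x), rfl⟩
  -- P fixes its range
  have hfix : ∀ i (v : H), v ∈ LinearMap.range (P i : H →ₗ[ℂ] H) → P i v = v := by
    rintro i v ⟨y, rfl⟩
    have := DFunLike.congr_fun (hPidem i) y
    simpa using this
  -- cross terms vanish for i < j
  have cross_lt : ∀ i j, i < j → B i * B j = 0 := by
    intro i j hij
    ext x
    have hv : B j x ∈ LinearMap.range (P j : H →ₗ[ℂ] H) := hmemrange j x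
    -- range P j ⊆ range P i
    have hsub : LinearMap.range (P j : H →ₗ[ℂ] H) ≤ LinearMap.range (P i : H →ₗ[ℂ] H) := by
      rw [hPrange i, hPrange j]
      refine le_iInf₂ fun l hl => ?_
      exact iInf₂_le l (Finset.mem_range.mpr (lt_trans (Finset.mem_range.mp hl) hij))
    have hfixv : P i (B j x) = B j x := hfix i _ (hsub hv)
    have hker : A i (B j x) = 0 := by
      have : B j x ∈ ⨅ l ∈ Finset.range j, LinearMap.ker (A l : H →ₗ[ℂ] H) := by
        rw [← hPrange j]; exact hv
      simp only [Submodule.mem_iInf] at this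
      exact this i (Finset.mem_range.mpr hij)
    simp only [ContinuousLinearMap.mul_apply, ContinuousLinearMap.zero_apply]
    rw [hB i]
    simp [ContinuousLinearMap.mul_apply, hfixv, hker]
  -- cross terms vanish for all i ≠ j
  have cross : ∀ i j, i ≠ j → B i * B j = 0 := by
    intro i j hij
    rcases lt_or_gt_of_ne hij with h | h
    · exact cross_lt i j h
    · have : star (B j * B i) = (0 : H →L[ℂ] H) := by rw [cross_lt j i h, star_zero]
      rwa [star_mul, (hBsa i).star_eq, (hBsa j).star_eq] at this
  -- B i * S = B i * B i
  have hBiS : ∀ i, B i * S = B i * B i := by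
    intro i
    ext x
    have h1 : HasSum (fun k => B i (B k x)) (B i (S x)) := (hS x).mapL (B i)
    have h2 : HasSum (fun k => B i (B k x)) (B i (B i x)) := by
      refine hasSum_single i fun k hk => ?_
      have := DFunLike.congr_fun (cross i k (Ne.symm hk)) x
      simpa using this
    simpa using h1.unique h2
  have hSBi : ∀ i, S * B i = B i * B i := by
    intro i
    ext x
    have h1 : HasSum (fun k => B k (B i x)) (S (B i x)) := hS (B i x)
    have h2 : HasSum (fun k => B k (B i x)) (B i (B i x)) := by
      refine hasSum_single i fun k hk => ?_
      have := DFunLike.congr_fun (cross k i hk) x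
      simpa using this
    simpa using h1.unique h2
  subst hBesc
  refine ⟨fun i => ?_, fun i j => ?_⟩
  · constructor
    · rw [mul_sub, sub_mul, mul_one, one_mul, hBiS, hSBi]
    · rw [mul_sub, mul_one, hBiS]
  · rcases eq_or_ne i j with rfl | h
    · rfl
    · rw [cross i j h, cross j i (Ne.symm h)]
end

section
/- Range of the collapse map (necessity): if (A_n) is an ordered POVM with collapse coordinates B_k = P_{k-1} A_k P_{k-1}, then ∩_{k≥1} ker B_k = {0}; that is, if B_k x = 0 for every k then x = 0. -/
open scoped InnerProductSpace

set_option maxHeartbeats 1000000 in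
set_option synthInstance.maxHeartbeats 400000 in
/-- A positive operator with vanishing quadratic form at `x` kills `x`. -/
lemma pos_apply_eq_zero_of_inner_eq_zero
    {H : Type*} [NormedAddCommGroup H] [InnerProductSpace ℂ H] [CompleteSpace H]
    {T : H →L[ℂ] H} (hT : 0 ≤ T) {x : H} (hx : ⟪x, T x⟫_ℂ = 0) : T x = 0 := by
  set S := CFC.sqrt T with hSdef
  have hS : (0 : H →L[ℂ] H) ≤ S := CFC.sqrt_nonneg (a := T)
  have hSS : S * S = T := CFC.sqrt_mul_sqrt_self T hT
  have hSsa : IsSelfAdjoint S := IsSelfAdjoint.of_nonneg hS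
  have hadj : ContinuousLinearMap.adjoint S = S := hSsa
  have h0 : ⟪S x, S x⟫_ℂ = 0 := by
    have key := ContinuousLinearMap.adjoint_inner_left S (S x) x
    rw [hadj] at key
    -- key : ⟪S x, S x⟫ = ⟪x, S (S x)⟫
    have hTx : S (S x) = T x := by rw [← hSS]; rfl
    rw [key, hTx, hx]
  have hSx : S x = 0 := inner_self_eq_zero.mp h0
  have : T x = S (S x) := by rw [← hSS]; rfl
  rw [this, hSx, map_zero]

/- Range of the collapse map, necessity: the collapse coordinates
`B k = P k A k P k` of an ordered POVM have trivial common kernel. -/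
theorem collapse_coordinates_trivial_common_kernel
    {H : Type*} [NormedAddCommGroup H] [InnerProductSpace ℂ H] [CompleteSpace H]
    (A : ℕ → H →L[ℂ] H)
    (hApos : ∀ n, 0 ≤ A n)
    (hAsum : ∀ h : H, HasSum (fun n => A n h) h)
    (P : ℕ → H →L[ℂ] H)
    (hPidem : ∀ k, IsIdempotentElem (P k))
    (hPsa : ∀ k, IsSelfAdjoint (P k))
    (hPrange : ∀ k, LinearMap.range (P k : H →ₗ[ℂ] H) = ⨅ j ∈ Finset.range k, LinearMap.ker (A j : H →ₗ[ℂ] H))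
    (B : ℕ → H →L[ℂ] H)
    (hB : ∀ k, B k = P k * A k * P k) :
    ∀ x : H, (∀ k, B k x = 0) → x = 0 := by
  intro x hx
  -- If `x` is killed by all earlier `A j`, then `P k` fixes `x`.
  have hPx : ∀ k, (∀ j, j < k → A j x = 0) → P k x = x := by
    intro k h
    have hmem : x ∈ LinearMap.range (P k : H →ₗ[ℂ] H) := by
      rw [hPrange]
      simp only [Submodule.mem_iInf, LinearMap.mem_ker, Finset.mem_range]
      exact fun j hj => h j hj
    obtain ⟨y, hy⟩ := hmem
    have := congrArg (fun z => z y) (hPidem k)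
    simp only [ContinuousLinearMap.mul_apply] at this
    rw [← hy]
    exact this
  -- All `A k` kill `x`, by strong induction.
  have hAx : ∀ k, A k x = 0 := by
    intro k
    induction k using Nat.strong_induction_on with
    | _ k ih =>
      have hPk : P k x = x := hPx k ih
      have hBk := hx k
      rw [hB k] at hBk
      simp only [ContinuousLinearMap.mul_apply, hPk] at hBk
      -- hBk : P k (A k x) = 0
      have hinner : ⟪x, A k x⟫_ℂ = 0 := by
        have hadj : ContinuousLinearMap.adjoint (P k) = P k := hPsa k
        calc ⟪x, A k x⟫_ℂ = ⟪P k x, A k x⟫_ℂ := by rw [hPk]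
          _ = 0 := by
              have key := ContinuousLinearMap.adjoint_inner_left (P k) (A k x) x
              rw [hadj] at key
              rw [key, hBk, inner_zero_right]
      exact pos_apply_eq_zero_of_inner_eq_zero (hApos k) hinner
  -- Conclude from the sum condition.
  have h1 : HasSum (fun n => A n x) x := hAsum x
  have h2 : HasSum (fun _ : ℕ => (0 : H)) x := by simpa [hAx] using h1
  exact (hasSum_zero.unique h2).symm
end

section
/- Range of the collapse map (sufficiency construction): let (B_k) be pairwise orthogonal positive contractions whose support projections S_k satisfy Σ S_k = I strongly, and define A_1 = B_1 and A_k = B_k + (S_{k-1} - B_{k-1}) for k ≥ 2. Then each A_k is positive, Σ_{k=1}^N A_k = Σ_{k=1}^{N-1} S_k + B_N for N ≥ 2, and Σ_{k≥1} A_k = I strongly, so (A_k) is an ordered POVM. -/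
open ContinuousLinearMap
open scoped InnerProductSpace

/- Range of the collapse map, sufficiency construction (0-based indexing):
from pairwise orthogonal positive contractions `B k` whose support projections
`S k` sum strongly to `I`, the operators `A 0 = B 0`,
`A (k+1) = B (k+1) + (S k - B k)` are positive, satisfy
`Σ_{k≤N} A k = Σ_{k<N} S k + B N`, and sum strongly to `I`, hence form an
ordered POVM. -/
theorem collapse_range_construction
    {H : Type*} [NormedAddCommGroup H] [InnerProductSpace ℂ H] [CompleteSpace H]
    (B : ℕ → H →L[ℂ] H)
    (hBpos : ∀ k, 0 ≤ B k) (hBcontr : ∀ k, B k ≤ 1)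
    (hBorth : ∀ i j, i ≠ j → B i * B j = 0)
    (S : ℕ → H →L[ℂ] H)
    (hSidem : ∀ k, IsIdempotentElem (S k))
    (hSsa : ∀ k, IsSelfAdjoint (S k))
    (hSrange : ∀ k, LinearMap.range (S k : H →ₗ[ℂ] H) = (LinearMap.range (B k : H →ₗ[ℂ] H)).topologicalClosure)
    (hSsum : ∀ h : H, HasSum (fun k => S k h) h)
    (A : ℕ → H →L[ℂ] H)
    (hA0 : A 0 = B 0)
    (hAk : ∀ k, A (k + 1) = B (k + 1) + (S k - B k)) :
    (∀ k, 0 ≤ A k) ∧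
    (∀ N : ℕ, ∑ k ∈ Finset.range (N + 1), A k = (∑ k ∈ Finset.range N, S k) + B N) ∧
    (∀ h : H, HasSum (fun k => A k h) h) := by
  have hBsa : ∀ k, IsSelfAdjoint (B k) := fun k =>
    ((nonneg_iff_isPositive (B k)).mp (hBpos k)).isSelfAdjoint
  have hsw : ∀ (T : H →L[ℂ] H), IsSelfAdjoint T → ∀ x y : H, ⟪T x, y⟫_ℂ = ⟪x, T y⟫_ℂ := by
    intro T hT x y
    nth_rewrite 1 [← hT.adjoint_eq]
    exact adjoint_inner_left T y x
  have hSidem' : ∀ k (x : H), S k (S k x) = S k x := by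
    intro k x
    have := DFunLike.congr_fun (hSidem k) x
    simpa using this
  -- S k acts as identity on range of B k
  have hSB : ∀ k x, S k (B k x) = B k x := by
    intro k x
    have hx : B k x ∈ LinearMap.range (S k : H →ₗ[ℂ] H) := by
      rw [hSrange k]
      exact Submodule.le_topologicalClosure _ ⟨x, rfl⟩
    obtain ⟨y, hy⟩ := hx
    rw [← hy]; exact hSidem' k y
  -- B k ∘ S k = B k pointwise
  have hBSk : ∀ k x, B k (S k x) = B k x := by
    intro k x
    have hop : B k * S k = B k := by
      have h1 : S k * B k = B k := by
        ext z; simpa using hSB k z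
      calc B k * S k = star (S k * B k) := by
            rw [star_mul, (hSsa k).star_eq, (hBsa k).star_eq]
          _ = B k := by rw [h1, (hBsa k).star_eq]
    have := DFunLike.congr_fun hop x
    simpa using this
  -- B i kills range of S j for i ≠ j
  have hBS0 : ∀ i j, i ≠ j → ∀ x, B i (S j x) = 0 := by
    intro i j hij x
    have hx : S j x ∈ closure ((LinearMap.range (B j : H →ₗ[ℂ] H) : Submodule ℂ H) : Set H) := by
      have : S j x ∈ LinearMap.range (S j : H →ₗ[ℂ] H) := ⟨x, rfl⟩
      rw [hSrange j] at this
      exact this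
    have hsub : ((LinearMap.range (B j : H →ₗ[ℂ] H) : Submodule ℂ H) : Set H) ⊆ {y | B i y = 0} := by
      rintro _ ⟨z, rfl⟩
      have := DFunLike.congr_fun (hBorth i j hij) z
      simpa using this
    exact closure_minimal hsub (isClosed_eq (B i).continuous continuous_const) hx
  -- S i S j = 0 for i ≠ j
  have hSS0 : ∀ i j, i ≠ j → ∀ x, S i (S j x) = 0 := by
    intro i j hij x
    have hworth : ∀ u ∈ ((LinearMap.range (B i : H →ₗ[ℂ] H) : Submodule ℂ H) : Set H),
        ⟪u, S i (S j x)⟫_ℂ = 0 := by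
      rintro _ ⟨z, rfl⟩
      calc ⟪B i z, S i (S j x)⟫_ℂ
          = ⟪S i (B i z), S j x⟫_ℂ := (hsw (S i) (hSsa i) (B i z) (S j x)).symm
        _ = ⟪B i z, S j x⟫_ℂ := by rw [hSB i z]
        _ = ⟪z, B i (S j x)⟫_ℂ := hsw (B i) (hBsa i) z (S j x)
        _ = 0 := by rw [hBS0 i j hij x, inner_zero_right]
    have hwcl : S i (S j x) ∈ closure ((LinearMap.range (B i : H →ₗ[ℂ] H) : Submodule ℂ H) : Set H) := by
      have : S i (S j x) ∈ LinearMap.range (S i : H →ₗ[ℂ] H) := ⟨S j x, rfl⟩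
      rw [hSrange i] at this
      exact this
    have hzero : ⟪S i (S j x), S i (S j x)⟫_ℂ = 0 := by
      have hclosed : IsClosed {u : H | ⟪u, S i (S j x)⟫_ℂ = 0} :=
        isClosed_eq (continuous_id.inner continuous_const) continuous_const
      exact closure_minimal hworth hclosed hwcl
    exact inner_self_eq_zero.mp hzero
  -- 0 ≤ S k - B k
  have hSsubB : ∀ k, 0 ≤ S k - B k := by
    intro k
    rw [nonneg_iff_isPositive]
    refine isPositive_def'.mpr ⟨((hSsa k).sub (hBsa k)), fun x => ?_⟩
    have e1 : ⟪S k x, x⟫_ℂ = ⟪S k x, S k x⟫_ℂ := by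
      nth_rewrite 1 [← hSidem' k x]
      exact hsw (S k) (hSsa k) (S k x) x
    have e2 : ⟪B k x, x⟫_ℂ = ⟪B k (S k x), S k x⟫_ℂ := by
      calc ⟪B k x, x⟫_ℂ = ⟪B k (S k x), x⟫_ℂ := by rw [hBSk]
        _ = ⟪S k (B k (S k x)), x⟫_ℂ := by rw [hSB]
        _ = ⟪B k (S k x), S k x⟫_ℂ := hsw (S k) (hSsa k) _ x
    have hre : (S k - B k).reApplyInnerSelf x
        = ‖S k x‖ ^ 2 - Complex.re ⟪B k (S k x), S k x⟫_ℂ := by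
      simp only [reApplyInnerSelf, sub_apply, inner_sub_left, map_sub, e1, e2,
        inner_self_eq_norm_sq]
      rfl
    rw [hre, sub_nonneg, ← sub_nonneg]
    have h1 : ((1 : H →L[ℂ] H) - B k).IsPositive := by
      rw [← nonneg_iff_isPositive, sub_nonneg]; exact hBcontr k
    have := h1.2 (S k x)
    simp only [reApplyInnerSelf, sub_apply, one_apply, inner_sub_left, map_sub,
      inner_self_eq_norm_sq] at this
    simpa [inner_self_eq_norm_sq, ← Complex.ofReal_pow, Complex.ofReal_re] using this
  have hBnorm : ∀ k, ‖B k‖ ≤ 1 := fun k =>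
    (CStarAlgebra.norm_le_one_iff_of_nonneg (B k) (hBpos k)).mpr (hBcontr k)
  refine ⟨?_, ?_, ?_⟩
  · intro k
    cases k with
    | zero => rw [hA0]; exact hBpos 0
    | succ n => rw [hAk n]; exact add_nonneg (hBpos (n + 1)) (hSsubB n)
  · intro N
    induction N with
    | zero => simp [hA0]
    | succ n ih =>
      rw [Finset.sum_range_succ, ih, hAk n, Finset.sum_range_succ]
      abel
  · intro h
    -- Parseval: Summable ‖S k h‖²
    have hinner : ∀ k, ⟪h, S k h⟫_ℂ = (‖S k h‖ ^ 2 : ℝ) := by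
      intro k
      have e : ⟪h, S k h⟫_ℂ = ⟪S k h, S k h⟫_ℂ := by
        nth_rewrite 1 [← hSidem' k h]
        exact (hsw (S k) (hSsa k) h (S k h)).symm
      rw [e, inner_self_eq_norm_sq_to_K]
      norm_cast
    have hsum1 : HasSum (fun k => ⟪h, S k h⟫_ℂ) ⟪h, h⟫_ℂ :=
      (innerSL ℂ h).hasSum (hSsum h)
    have hPars : Summable (fun k => ‖S k h‖ ^ 2) := by
      have hre : HasSum (fun k => Complex.re ⟪h, S k h⟫_ℂ) (Complex.re ⟪h, h⟫_ℂ) :=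
        Complex.reCLM.hasSum hsum1
      refine ⟨Complex.re ⟪h, h⟫_ℂ, ?_⟩
      convert hre using 2 with k
      rw [hinner k]
      norm_cast
    -- c k = B k h - S k h, with c k ∈ range (S k)
    set c : ℕ → H := fun k => B k h - S k h with hc_def
    have hcmem : ∀ k, c k ∈ LinearMap.range (S k : H →ₗ[ℂ] H) :=
      fun k => Submodule.sub_mem _ ⟨B k h, hSB k h⟩ ⟨h, rfl⟩
    have hcnorm : ∀ k, ‖c k‖ ≤ 2 * ‖S k h‖ := by
      intro k
      have hb : ‖B k h‖ ≤ ‖S k h‖ := by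
        calc ‖B k h‖ = ‖B k (S k h)‖ := by rw [hBSk]
          _ ≤ ‖B k‖ * ‖S k h‖ := (B k).le_opNorm _
          _ ≤ 1 * ‖S k h‖ := by
              gcongr
              exact hBnorm k
          _ = ‖S k h‖ := one_mul _
      calc ‖c k‖ ≤ ‖B k h‖ + ‖S k h‖ := norm_sub_le _ _
        _ ≤ ‖S k h‖ + ‖S k h‖ := by gcongr
        _ = 2 * ‖S k h‖ := by ring
    -- orthogonal family of ranges of S k
    have hGclosed : ∀ k, IsClosed ((LinearMap.range (S k : H →ₗ[ℂ] H) : Submodule ℂ H) : Set H) := by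
      intro k
      rw [hSrange k]
      exact (LinearMap.range (B k : H →ₗ[ℂ] H)).isClosed_topologicalClosure
    haveI : ∀ k, CompleteSpace (LinearMap.range (S k : H →ₗ[ℂ] H)) :=
      fun k => (hGclosed k).completeSpace_coe
    have hOF : OrthogonalFamily ℂ (fun k => (LinearMap.range (S k : H →ₗ[ℂ] H) : Submodule ℂ H))
        (fun k => (LinearMap.range (S k : H →ₗ[ℂ] H)).subtypeₗᵢ) := by
      intro i j hij v w
      obtain ⟨a, ha⟩ := v.2
      obtain ⟨b, hb⟩ := w.2
      show ⟪(v : H), (w : H)⟫_ℂ = 0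
      rw [← ha, ← hb]
      calc ⟪S i a, S j b⟫_ℂ = ⟪a, S i (S j b)⟫_ℂ := hsw (S i) (hSsa i) a (S j b)
        _ = 0 := by rw [hSS0 i j hij b, inner_zero_right]
    -- Summable c
    have hcsummable : Summable c := by
      have hns : Summable (fun k => ‖(⟨c k, hcmem k⟩ : LinearMap.range (S k : H →ₗ[ℂ] H))‖ ^ 2) := by
        refine Summable.of_nonneg_of_le (fun k => by positivity) (fun k => ?_)
          (hPars.mul_left 4)
        have : ‖(⟨c k, hcmem k⟩ : LinearMap.range (S k : H →ₗ[ℂ] H))‖ = ‖c k‖ := rfl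
        rw [this]
        calc ‖c k‖ ^ 2 ≤ (2 * ‖S k h‖) ^ 2 := by
              have := hcnorm k
              have h0 : (0:ℝ) ≤ ‖c k‖ := norm_nonneg _
              nlinarith
          _ = 4 * ‖S k h‖ ^ 2 := by ring
      have := (hOF.summable_iff_norm_sq_summable (fun k => ⟨c k, hcmem k⟩)).mpr hns
      simpa using this
    obtain ⟨x, hcx⟩ := hcsummable
    -- shifted sequence
    set e : ℕ → H := fun k => if k = 0 then 0 else c (k - 1) with he_def
    have hex : HasSum e x := by
      have hinj : Function.Injective (fun n : ℕ => n + 1) := fun a b hab => by simpa using hab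
      have h0 : ∀ n, n ∉ Set.range (fun n : ℕ => n + 1) → e n = 0 := by
        intro n hn
        have : n = 0 := by
          by_contra hne
          exact hn ⟨n - 1, by simp; omega⟩
        simp [he_def, this]
      have hcomp : (e ∘ fun n : ℕ => n + 1) = c := by
        funext n
        simp [he_def]
      exact (hinj.hasSum_iff h0).mp (hcomp ▸ hcx)
    have key : ∀ k, A k h = S k h + c k - e k := by
      intro k
      cases k with
      | zero =>
        simp only [hA0, he_def, hc_def, if_pos rfl]
        abel
      | succ n =>
        have : e (n + 1) = c n := by simp [he_def]
        rw [hAk n, this]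
        simp only [hc_def, add_apply, sub_apply]
        abel
    have hfinal : HasSum (fun k => S k h + c k - e k) h := by
      have := ((hSsum h).add hcx).sub hex
      simpa using this
    exact (funext key : (fun k => A k h) = _) ▸ hfinal
end

section
/- For the ordered POVM A_1 = B_1, A_k = B_k + (S_{k-1} - B_{k-1}) built from a collapsed family, the ordered kernel filtration satisfies ∩_{j<k} ker A_j = (Σ_{j<k} S_j H)^⊥ for every k, and consequently P_{k-1} A_k P_{k-1} = B_k, i.e. the collapse of (A_k) recovers (B_k). -/
private lemma ker_eq_orth_range_of_sa
    {H : Type*} [NormedAddCommGroup H] [InnerProductSpace ℂ H] [CompleteSpace H]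
    (T : H →L[ℂ] H) (hT : IsSelfAdjoint T) :
    LinearMap.ker (T : H →ₗ[ℂ] H) = (LinearMap.range (T : H →ₗ[ℂ] H))ᗮ := by
  have key : ∀ x y : H, (inner ℂ (T y) x : ℂ) = inner ℂ y (T x) := by
    intro x y
    have := ContinuousLinearMap.adjoint_inner_left T x y
    rwa [hT.adjoint_eq] at this
  ext x
  simp only [LinearMap.mem_ker, Submodule.mem_orthogonal, ContinuousLinearMap.coe_coe]
  constructor
  · rintro hx u ⟨y, rfl⟩
    rw [ContinuousLinearMap.coe_coe, key x y, hx, inner_zero_right]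
  · intro h
    have h1 : (inner ℂ (T x) (T x) : ℂ) = 0 := by
      rw [← key x (T x)]
      exact h (T (T x)) ⟨T x, rfl⟩
    exact inner_self_eq_zero.mp h1

private lemma orth_closure
    {H : Type*} [NormedAddCommGroup H] [InnerProductSpace ℂ H] [CompleteSpace H]
    (U : Submodule ℂ H) : (U.topologicalClosure)ᗮ = Uᗮ := by
  haveI : CompleteSpace Uᗮ := U.isClosed_orthogonal.completeSpace_coe
  haveI : Submodule.HasOrthogonalProjection Uᗮ := Submodule.HasOrthogonalProjection.ofCompleteSpace _
  rw [← Submodule.orthogonal_orthogonal_eq_closure, Submodule.orthogonal_orthogonal]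

private lemma biInf_orthogonal
    {H : Type*} [NormedAddCommGroup H] [InnerProductSpace ℂ H]
    (s : Finset ℕ) (K : ℕ → Submodule ℂ H) :
    (⨅ j ∈ s, (K j)ᗮ) = (⨆ j ∈ s, K j)ᗮ := by
  rw [iSup_subtype', iInf_subtype']
  exact Submodule.iInf_orthogonal _

/- The construction `A 0 = B 0`, `A (k+1) = B (k+1) + (S k - B k)` collapses
back to `(B k)`: its ordered kernel filtration satisfies
`⋂_{j<k} ker (A j) = (Σ_{j<k} S j H)ᗮ`, and for any orthogonal projection
`Pk` onto `⋂_{j<k} ker (A j)` one has `Pk * A k * Pk = B k`. -/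
theorem collapse_recovers_collapsed_family
    {H : Type*} [NormedAddCommGroup H] [InnerProductSpace ℂ H] [CompleteSpace H]
    (B : ℕ → H →L[ℂ] H)
    (hBpos : ∀ k, 0 ≤ B k) (hBcontr : ∀ k, B k ≤ 1)
    (hBorth : ∀ i j, i ≠ j → B i * B j = 0)
    (S : ℕ → H →L[ℂ] H)
    (hSidem : ∀ k, IsIdempotentElem (S k))
    (hSsa : ∀ k, IsSelfAdjoint (S k))
    (hSrange : ∀ k, LinearMap.range (S k : H →ₗ[ℂ] H) = (LinearMap.range (B k : H →ₗ[ℂ] H)).topologicalClosure)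
    (hSsum : ∀ h : H, HasSum (fun k => S k h) h)
    (A : ℕ → H →L[ℂ] H)
    (hA0 : A 0 = B 0)
    (hAk : ∀ k, A (k + 1) = B (k + 1) + (S k - B k)) :
    (∀ k : ℕ, (⨅ j ∈ Finset.range k, LinearMap.ker (A j : H →ₗ[ℂ] H)) =
        (⨆ j ∈ Finset.range k, LinearMap.range (S j : H →ₗ[ℂ] H))ᗮ) ∧
    (∀ k : ℕ, ∀ Pk : H →L[ℂ] H, IsIdempotentElem Pk → IsSelfAdjoint Pk →
      LinearMap.range (Pk : H →ₗ[ℂ] H) = (⨅ j ∈ Finset.range k, LinearMap.ker (A j : H →ₗ[ℂ] H)) →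
      Pk * A k * Pk = B k) := by
  have hBsa : ∀ k, IsSelfAdjoint (B k) := fun k =>
    ((ContinuousLinearMap.nonneg_iff_isPositive _).mp (hBpos k)).isSelfAdjoint
  -- ker S k = ker B k
  have hker : ∀ k, LinearMap.ker (S k : H →ₗ[ℂ] H) = LinearMap.ker (B k : H →ₗ[ℂ] H) := by
    intro k
    rw [ker_eq_orth_range_of_sa _ (hSsa k), ker_eq_orth_range_of_sa _ (hBsa k),
      hSrange k, orth_closure]
  have hkerx : ∀ k x, S k x = 0 ↔ B k x = 0 := by
    intro k x
    constructor
    · intro h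
      have : x ∈ LinearMap.ker (B k : H →ₗ[ℂ] H) := (hker k) ▸ (LinearMap.mem_ker.mpr h)
      exact this
    · intro h
      have : x ∈ LinearMap.ker (S k : H →ₗ[ℂ] H) := (hker k).symm ▸ (LinearMap.mem_ker.mpr h)
      exact this
  -- kernel filtration equivalence
  have auxAS : ∀ (x : H) (j : ℕ), (∀ i, i ≤ j → A i x = 0) → S j x = 0 := by
    intro x j
    induction j with
    | zero =>
      intro h
      have h0 : B 0 x = 0 := by rw [← hA0]; exact h 0 le_rfl
      exact (hkerx 0 x).mpr h0
    | succ j ih =>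
      intro h
      have hSj : S j x = 0 := ih (fun i hi => h i (hi.trans (Nat.le_succ j)))
      have hBj : B j x = 0 := (hkerx j x).mp hSj
      have hA : A (j + 1) x = 0 := h (j + 1) le_rfl
      rw [hAk j] at hA
      simp only [ContinuousLinearMap.add_apply, ContinuousLinearMap.sub_apply,
        hSj, hBj, sub_zero, zero_sub, neg_zero, add_zero] at hA
      exact (hkerx (j + 1) x).mpr hA
  have hSA : ∀ (x : H) (j : ℕ), (∀ i, i ≤ j → S i x = 0) → A j x = 0 := by
    intro x j h
    cases j with
    | zero =>
      rw [hA0]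
      exact (hkerx 0 x).mp (h 0 le_rfl)
    | succ j =>
      have hSj : S j x = 0 := h j (Nat.le_succ j)
      have hBj : B j x = 0 := (hkerx j x).mp hSj
      have hBj1 : B (j + 1) x = 0 := (hkerx (j + 1) x).mp (h (j + 1) le_rfl)
      rw [hAk j]
      simp [hSj, hBj, hBj1]
  have hmemA : ∀ (k : ℕ) (x : H),
      x ∈ (⨅ j ∈ Finset.range k, LinearMap.ker (A j : H →ₗ[ℂ] H)) ↔ ∀ j < k, A j x = 0 := by
    intro k x
    simp [Submodule.mem_iInf, LinearMap.mem_ker]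
  have hmemS : ∀ (k : ℕ) (x : H),
      x ∈ (⨅ j ∈ Finset.range k, LinearMap.ker (S j : H →ₗ[ℂ] H)) ↔ ∀ j < k, S j x = 0 := by
    intro k x
    simp [Submodule.mem_iInf, LinearMap.mem_ker]
  have hinfeq : ∀ k : ℕ, (⨅ j ∈ Finset.range k, LinearMap.ker (A j : H →ₗ[ℂ] H)) =
      (⨅ j ∈ Finset.range k, LinearMap.ker (S j : H →ₗ[ℂ] H)) := by
    intro k
    ext x
    rw [hmemA, hmemS]
    constructor
    · intro h j hj
      exact auxAS x j (fun i hi => h i (lt_of_le_of_lt hi hj))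
    · intro h j hj
      exact hSA x j (fun i hi => h i (lt_of_le_of_lt hi hj))
  have part1 : ∀ k : ℕ, (⨅ j ∈ Finset.range k, LinearMap.ker (A j : H →ₗ[ℂ] H)) =
      (⨆ j ∈ Finset.range k, LinearMap.range (S j : H →ₗ[ℂ] H))ᗮ := by
    intro k
    rw [hinfeq k, ← biInf_orthogonal]
    exact iInf_congr fun j => iInf_congr fun _ => ker_eq_orth_range_of_sa _ (hSsa j)
  refine ⟨part1, ?_⟩
  intro k Pk hidem hsa hrange
  have hrangeS : LinearMap.range (Pk : H →ₗ[ℂ] H) = ⨅ j ∈ Finset.range k, LinearMap.ker (S j : H →ₗ[ℂ] H) := by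
    rw [hrange, hinfeq k]
  have hfix : ∀ y ∈ LinearMap.range (Pk : H →ₗ[ℂ] H), Pk y = y := by
    rintro y ⟨z, rfl⟩
    calc Pk (Pk z) = (Pk * Pk) z := rfl
    _ = Pk z := by rw [hidem]
  cases k with
  | zero =>
    have hPk1 : Pk = 1 := by
      ext x
      have hx : x ∈ LinearMap.range (Pk : H →ₗ[ℂ] H) := by
        rw [hrange]; simp
      simpa using hfix x hx
    rw [hPk1, hA0, one_mul, mul_one]
  | succ k =>
    -- Pk x lies in the kernel of S j and B j for each j ≤ k
    have hPkker : ∀ (x : H) (j : ℕ), j < k + 1 → S j (Pk x) = 0 := by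
      intro x j hj
      have hx : Pk x ∈ LinearMap.range (Pk : H →ₗ[ℂ] H) := ⟨x, rfl⟩
      rw [hrangeS] at hx
      exact (hmemS (k + 1) (Pk x)).mp hx j hj
    have hSP : S k * Pk = 0 := by
      ext x
      exact hPkker x k (Nat.lt_succ_self k)
    have hBPk0 : B k * Pk = 0 := by
      ext x
      exact (hkerx k (Pk x)).mp (hPkker x k (Nat.lt_succ_self k))
    -- B (k+1) maps into range Pk
    have hBmem : ∀ x : H, B (k + 1) x ∈ LinearMap.range (Pk : H →ₗ[ℂ] H) := by
      intro x
      rw [hrangeS]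
      apply (hmemS (k + 1) _).mpr
      intro j hj
      apply (hkerx j _).mpr
      calc B j (B (k + 1) x) = (B j * B (k + 1)) x := rfl
      _ = 0 := by rw [hBorth j (k + 1) (Nat.ne_of_lt hj)]; rfl
    have hPB : Pk * B (k + 1) = B (k + 1) := by
      ext x
      exact hfix _ (hBmem x)
    have hBP : B (k + 1) * Pk = B (k + 1) := by
      have := congrArg star hPB
      rwa [star_mul, hsa.star_eq, (hBsa (k + 1)).star_eq] at this
    have hexp : Pk * A (k + 1) * Pk =
        Pk * (B (k + 1) * Pk) + Pk * (S k * Pk) - Pk * (B k * Pk) := by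
      rw [hAk k]; noncomm_ring
    rw [hexp, hBP, hSP, hBPk0, mul_zero, add_zero, sub_zero, hPB]
end

section
/- For the residual allocation polynomials p_{m,j}, one has p_{m,1}(t) = t^{m+1} for all m ≥ 0, and p_{m,2}(t) = t^m ∏_{ℓ=1}^{m}(1 - t^ℓ) for all m ≥ 1. -/
/-- The residual allocation polynomials `p_{m,j}` (1-based in `j`):
`p 0 1 t = t`; `p (m+1) j t = t * ∏_{1≤ℓ<j} (1 - p m ℓ t) * p m j t` for
`1 ≤ j ≤ m+1`; `p (m+1) (m+2) t = t * ∏_{ℓ=1}^{m+1} (1 - p m ℓ t)`;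
`p m j t = 0` for `j` out of range. -/
noncomputable def presid : ℕ → ℕ → ℝ → ℝ
  | 0, j, t => if j = 1 then t else 0
  | (m + 1), j, t =>
      if j = m + 2 then t * ∏ l ∈ Finset.Icc 1 (m + 1), (1 - presid m l t)
      else if 1 ≤ j ∧ j ≤ m + 1 then
        t * (∏ l ∈ Finset.Ico 1 j, (1 - presid m l t)) * presid m j t
      else 0

/- Closed forms: `p_{m,1}(t) = t^{m+1}` for all `m ≥ 0`, and
`p_{m,2}(t) = t^m ∏_{ℓ=1}^m (1 - t^ℓ)` for all `m ≥ 1`, for `t ∈ [0,1]`. -/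
theorem presid_first_two_closed_forms (t : ℝ) (ht : t ∈ Set.Icc (0 : ℝ) 1) :
    (∀ m : ℕ, presid m 1 t = t ^ (m + 1)) ∧
    (∀ m : ℕ, 1 ≤ m → presid m 2 t = t ^ m * ∏ l ∈ Finset.Icc 1 m, (1 - t ^ l)) := by
  have h1 : ∀ m : ℕ, presid m 1 t = t ^ (m + 1) := by
    intro m
    induction m with
    | zero => simp [presid]
    | succ m ih =>
      have : (1 : ℕ) ≠ m + 2 := by omega
      simp only [presid, this, if_false]
      rw [if_pos ⟨le_refl 1, by omega⟩]
      simp [ih, pow_succ, mul_comm]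
  refine ⟨h1, ?_⟩
  intro m hm
  induction m with
  | zero => omega
  | succ m ih =>
    rcases Nat.eq_zero_or_pos m with rfl | hm'
    · simp only [presid]
      norm_num
    · have hne : (2 : ℕ) ≠ m + 2 := by omega
      simp only [presid, hne, if_false]
      rw [if_pos ⟨by omega, by omega⟩]
      have : Finset.Ico 1 2 = {1} := rfl
      rw [this, Finset.prod_singleton, h1 m, ih hm',
        show m + 1 = m + 1 from rfl]
      rw [Finset.prod_Icc_succ_top (by omega : 1 ≤ m + 1)]
      ring
end
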